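/- Let Σ(z) = Σ_{j=1}^m λ_j(1−z_j), and suppose for i = 1,…,m the formal power series (or analytic functions on |z_j| ≤ 1) V^b_i, V^c_i, S^b_i, S^c_i satisfy: (1) γ_i·V^b_i(z) + S^c_i(z) = S^b_i(z) + γ_i·V^c_i(z) with γ_i = 1/(λ_i·E C); (2) S^c_i(z) = S^b_i(z)·B̃_i(Σ(z))/z_i; (3) V^b_{i+1}(z) = V^c_i(z)·S̃_i(Σ(z)) (indices mod m); and define L(z) = (1/EC)·Σ_i [ (b_i/γ_i)·S^b_i(z)·(1−B̃_i(Σ(z)))/(b_i·Σ(z)) + s_i·V^c_i(z)·(1−S̃_i(Σ(z)))/(s_i·Σ(z)) ]. Then L(z)·Σ_{i=1}^m λ_i(1−z_i) = Σ_{i=1}^m λ_i(1−z_i)·S^c_i(z), i.e. equation (2.8) of the paper holds. -/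

import Mathlib

open Finset

/-- Algebraic derivation of the simplified polling formula (2.8) from the
Eisenberg relation (2.2), the service relation (2.3), the switchover relation
(2.4) and the stochastic mean value theorem (2.5)-(2.7). -/
theorem stmt7 (m : ℕ) [NeZero m] (hm : 1 ≤ m)
    (lam b s : Fin m → ℝ) (EC : ℝ)
    (z Vb Vc Sb Sc Bt St : Fin m → ℝ)
    (hEC : EC ≠ 0) (hb : ∀ i, b i ≠ 0) (hs : ∀ i, s i ≠ 0)
    (hlam : ∀ i, lam i ≠ 0) (hz : ∀ i, z i ≠ 0)
    (Sig : ℝ) (hSig : Sig = ∑ j, lam j * (1 - z j)) (hSig0 : Sig ≠ 0)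
    (γ : Fin m → ℝ) (hγ : ∀ i, γ i = 1 / (lam i * EC))
    (h1 : ∀ i, γ i * Vb i + Sc i = Sb i + γ i * Vc i)
    (h2 : ∀ i, Sc i = Sb i * Bt i / z i)
    (h3 : ∀ i, Vb (i + 1) = Vc i * St i)
    (L : ℝ)
    (hL : L = (1 / EC) * ∑ i, ((b i / γ i) * Sb i * (1 - Bt i) / (b i * Sig)
        + s i * Vc i * (1 - St i) / (s i * Sig))) :
    L * ∑ i, lam i * (1 - z i) = ∑ i, lam i * (1 - z i) * Sc i := by
  rw [← hSig, hL]
  have hzB : ∀ i, Sc i * z i = Sb i * Bt i := fun i => by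
    rw [h2 i, div_mul_cancel₀ _ (hz i)]
  have hVb : ∀ i, Vb i = Vc i + lam i * EC * (Sb i - Sc i) := by
    intro i
    have h := h1 i
    rw [hγ i] at h
    field_simp [hlam i, hEC] at h
    linarith
  have hA : ∀ i ∈ Finset.univ, (b i / γ i) * Sb i * (1 - Bt i) / (b i * Sig)
        + s i * Vc i * (1 - St i) / (s i * Sig)
      = (lam i * EC * (Sb i - Sc i * z i) + Vc i - Vc i * St i) / Sig := by
    intro i _
    rw [hγ i]
    field_simp [hb i, hs i, hSig0, hlam i, hEC]
    linear_combination (lam i * EC) * hzB i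
  rw [Finset.sum_congr rfl hA, ← Finset.sum_div]
  have hT : ∑ i, (lam i * EC * (Sb i - Sc i * z i) + Vc i - Vc i * St i)
      = EC * ∑ i, lam i * (1 - z i) * Sc i := by
    have hVSt : ∑ i, Vc i * St i = ∑ i, Vb i := by
      have : ∀ i, Vc i * St i = Vb (i + 1) := fun i => (h3 i).symm
      simp_rw [this]
      exact Fintype.sum_equiv (Equiv.addRight 1) _ _ (fun i => rfl)
    rw [show (∑ i, (lam i * EC * (Sb i - Sc i * z i) + Vc i - Vc i * St i))
        = (∑ i, (lam i * EC * (Sb i - Sc i * z i) + Vc i)) - ∑ i, Vc i * St i by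
      rw [← Finset.sum_sub_distrib], hVSt, ← Finset.sum_sub_distrib,
      Finset.mul_sum]
    apply Finset.sum_congr rfl
    intro i _
    rw [hVb i]
    ring
  rw [hT]
  field_simp
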